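/- Let u(m) = 2 + m² + m√(4+m²) and g(m) = (1/(2m))·(3·2^{2/3}·u(m)^{1/3} + 6·2^{1/3}·u(m)^{−1/3} − 10) for m > 0. Then g is strictly decreasing on the interval (0, 4], g(m) > 1 for all m ∈ (0, 4), and g(4) = 1. -/

import Mathlib

/-- `u(m) = 2 + m² + m√(4 + m²)`. -/
noncomputable def u (m : ℝ) : ℝ := 2 + m ^ 2 + m * Real.sqrt (4 + m ^ 2)

/-- `g(m) = (1/(2m))·(3·2^{2/3}·u(m)^{1/3} + 6·2^{1/3}·u(m)^{−1/3} − 10)`, the unique real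
root in `n` of the cubic `P(m,n) = m³n³ + 15m²n² + 48mn − 27m² − 64`. -/
noncomputable def g (m : ℝ) : ℝ :=
  (1 / (2 * m)) * (3 * 2 ^ ((2 : ℝ) / 3) * u m ^ ((1 : ℝ) / 3)
    + 6 * 2 ^ ((1 : ℝ) / 3) * (u m ^ ((1 : ℝ) / 3))⁻¹ - 10)

/-- Rational form of `g` under the substitution `m = (q⁶-1)/q³`. -/
lemma g_key (q : ℝ) (hq : 1 < q) :
    g ((q ^ 6 - 1) / q ^ 3) = (3 * q ^ 5 - 5 * q ^ 3 + 3 * q) / (q ^ 6 - 1) := by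
  have hq0 : 0 < q := lt_trans one_pos hq
  have hq6 : 0 < q ^ 6 - 1 := by
    have : 1 < q ^ 6 := one_lt_pow₀ hq (by norm_num)
    linarith
  set m : ℝ := (q ^ 6 - 1) / q ^ 3 with hm
  have hq3 : (0:ℝ) < q ^ 3 := by positivity
  have hsqrt : Real.sqrt (4 + m ^ 2) = (q ^ 6 + 1) / q ^ 3 := by
    rw [show (4:ℝ) + m ^ 2 = ((q ^ 6 + 1) / q ^ 3) ^ 2 by
      rw [hm]; field_simp; ring]
    exact Real.sqrt_sq (by positivity)
  have hu : u m = 2 * q ^ 6 := by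
    rw [u, hsqrt, hm]
    field_simp
    ring
  have h6 : (q ^ 6 : ℝ) ^ ((1:ℝ)/3) = q ^ 2 := by
    rw [← Real.rpow_natCast q 6, ← Real.rpow_mul hq0.le, ← Real.rpow_natCast q 2]
    norm_num
  have h13 : (u m) ^ ((1:ℝ)/3) = 2 ^ ((1:ℝ)/3) * q ^ 2 := by
    rw [hu, Real.mul_rpow (by norm_num) (by positivity), h6]
  have h2 : (2:ℝ) ^ ((2:ℝ)/3) * 2 ^ ((1:ℝ)/3) = 2 := by
    rw [← Real.rpow_add (by norm_num)]
    norm_num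
  have h2pos : (0:ℝ) < (2:ℝ) ^ ((1:ℝ)/3) := Real.rpow_pos_of_pos (by norm_num) _
  rw [g, h13]
  have hinv : (2 ^ ((1:ℝ)/3) * q ^ 2)⁻¹ = (2 ^ ((1:ℝ)/3))⁻¹ * (q ^ 2)⁻¹ := by
    rw [mul_inv]
  rw [hinv]
  have hexp : 3 * 2 ^ ((2:ℝ)/3) * (2 ^ ((1:ℝ)/3) * q ^ 2)
      + 6 * 2 ^ ((1:ℝ)/3) * ((2 ^ ((1:ℝ)/3))⁻¹ * (q ^ 2)⁻¹) - 10
      = 6 * q ^ 2 + 6 * (q ^ 2)⁻¹ - 10 := by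
    have : (6:ℝ) * 2 ^ ((1:ℝ)/3) * ((2 ^ ((1:ℝ)/3))⁻¹ * (q ^ 2)⁻¹)
        = 6 * (q ^ 2)⁻¹ := by
      field_simp
    rw [this]
    nlinarith [h2]
  rw [hexp, hm]
  have hq2 : (q:ℝ) ^ 2 ≠ 0 := by positivity
  field_simp
  ring

/-- The parametrization: for `m > 0` there is `q > 1` with `q³ = (m+√(m²+4))/2`
and `m = (q⁶-1)/q³`. -/
lemma q_exists (m : ℝ) (hm : 0 < m) :
    ∃ q : ℝ, 1 < q ∧ q ^ 3 = (m + Real.sqrt (m ^ 2 + 4)) / 2 ∧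
      m = (q ^ 6 - 1) / q ^ 3 := by
  set c : ℝ := (m + Real.sqrt (m ^ 2 + 4)) / 2 with hc
  have hs4 : Real.sqrt (m ^ 2 + 4) > 2 := by
    have : Real.sqrt 4 < Real.sqrt (m ^ 2 + 4) :=
      Real.sqrt_lt_sqrt (by norm_num) (by nlinarith)
    have h4 : Real.sqrt 4 = 2 := by
      rw [show (4:ℝ) = 2 ^ 2 by norm_num, Real.sqrt_sq (by norm_num)]
    linarith [this, h4.symm.le]
  have hc1 : 1 < c := by rw [hc]; linarith
  have hc0 : 0 < c := lt_trans one_pos hc1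
  refine ⟨c ^ ((1:ℝ)/3), ?_, ?_, ?_⟩
  · have h := Real.rpow_lt_rpow (by norm_num : (0:ℝ) ≤ 1) hc1 (by norm_num : (0:ℝ) < 1/3)
    rwa [Real.one_rpow] at h
  · rw [← Real.rpow_natCast (c ^ ((1:ℝ)/3)) 3, ← Real.rpow_mul hc0.le]
    norm_num
  · have h3 : (c ^ ((1:ℝ)/3)) ^ 3 = c := by
      rw [← Real.rpow_natCast (c ^ ((1:ℝ)/3)) 3, ← Real.rpow_mul hc0.le]
      norm_num
    have h6 : (c ^ ((1:ℝ)/3)) ^ 6 = c ^ 2 := by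
      rw [show (6:ℕ) = 3 * 2 by norm_num, pow_mul, h3]
    rw [h3, h6]
    have hsq : Real.sqrt (m ^ 2 + 4) ^ 2 = m ^ 2 + 4 :=
      Real.sq_sqrt (by positivity)
    have hcc : c ^ 2 = m * c + 1 := by
      rw [hc]; field_simp; nlinarith [hsq]
    rw [hcc]
    field_simp
    ring

/-- `φ³ = 2 + √5` where `φ = (1+√5)/2`. -/
lemma phi_cube : ((1 + Real.sqrt 5) / 2) ^ 3 = 2 + Real.sqrt 5 := by
  have hs : Real.sqrt 5 ^ 2 = 5 := Real.sq_sqrt (by norm_num)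
  linear_combination ((Real.sqrt 5 + 3) / 8) * hs

lemma sqrt5_gt_two : 2 < Real.sqrt 5 := by
  have : Real.sqrt 4 < Real.sqrt 5 := Real.sqrt_lt_sqrt (by norm_num) (by norm_num)
  have h4 : Real.sqrt 4 = 2 := by
    rw [show (4:ℝ) = 2 ^ 2 by norm_num, Real.sqrt_sq (by norm_num)]
  linarith [this, h4.symm.le]

/-- `G(q) = (3q⁵-5q³+3q)/(q⁶-1)` is strictly decreasing on `(1, φ]`. -/
lemma G_anti : StrictAntiOn (fun q : ℝ => (3 * q ^ 5 - 5 * q ^ 3 + 3 * q) / (q ^ 6 - 1))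
    (Set.Ioc 1 ((1 + Real.sqrt 5) / 2)) := by
  have hs : Real.sqrt 5 ^ 2 = 5 := Real.sq_sqrt (by norm_num)
  apply strictAntiOn_of_deriv_neg (convex_Ioc _ _)
  · apply ContinuousOn.div
    · fun_prop
    · fun_prop
    · intro x hx
      have hx1 : 1 < x := hx.1
      have : 1 < x ^ 6 := one_lt_pow₀ hx1 (by norm_num)
      linarith
  · intro x hx
    rw [interior_Ioc] at hx
    obtain ⟨hx1, hxφ⟩ := hx
    have hx0 : 0 < x := lt_trans one_pos hx1
    have hD : (0:ℝ) < x ^ 6 - 1 := by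
      have : 1 < x ^ 6 := one_lt_pow₀ hx1 (by norm_num)
      linarith
    have hN : HasDerivAt (fun y : ℝ => 3 * y ^ 5 - 5 * y ^ 3 + 3 * y)
        (3 * (5 * x ^ 4) - 5 * (3 * x ^ 2) + 3 * 1) x := by
      have h5 := (hasDerivAt_pow 5 x).const_mul (3:ℝ)
      have h3 := (hasDerivAt_pow 3 x).const_mul (5:ℝ)
      have h1 := (hasDerivAt_id x).const_mul (3:ℝ)
      have := (h5.sub h3).add h1
      exact this.congr_deriv (by norm_num)
    have hDd : HasDerivAt (fun y : ℝ => y ^ 6 - 1) (6 * x ^ 5) x := by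
      have h6 := (hasDerivAt_pow 6 x).sub_const (1:ℝ)
      exact h6.congr_deriv (by norm_num)
    have hG : HasDerivAt (fun q : ℝ => (3 * q ^ 5 - 5 * q ^ 3 + 3 * q) / (q ^ 6 - 1))
        (((3 * (5 * x ^ 4) - 5 * (3 * x ^ 2) + 3 * 1) * (x ^ 6 - 1)
          - (3 * x ^ 5 - 5 * x ^ 3 + 3 * x) * (6 * x ^ 5)) / (x ^ 6 - 1) ^ 2) x :=
      hN.div hDd (ne_of_gt hD)
    rw [hG.deriv]
    apply div_neg_of_neg_of_pos _ (by positivity)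
    -- numerator = -3(x²+1)((x²-x-1)(x²+x-1))²
    have hA : x ^ 2 - x - 1 < 0 := by
      have h1 : 0 < Real.sqrt 5 - (2 * x - 1) := by
        have := sqrt5_gt_two
        nlinarith
      have h2 : 0 < Real.sqrt 5 + (2 * x - 1) := by
        have := sqrt5_gt_two
        nlinarith
      nlinarith [mul_pos h1 h2]
    have hB : 0 < x ^ 2 + x - 1 := by nlinarith
    have hC : (x ^ 2 - x - 1) * (x ^ 2 + x - 1) < 0 := mul_neg_of_neg_of_pos hA hB
    have hC2 : 0 < ((x ^ 2 - x - 1) * (x ^ 2 + x - 1)) ^ 2 := by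
      have := mul_pos_of_neg_of_neg hC hC
      nlinarith [this]
    nlinarith [hC2, sq_nonneg x, mul_pos (show (0:ℝ) < x ^ 2 + 1 by positivity) hC2]

lemma g_four : g 4 = 1 := by
  have hs : Real.sqrt 5 ^ 2 = 5 := Real.sq_sqrt (by norm_num)
  have hs2 := sqrt5_gt_two
  set φ : ℝ := (1 + Real.sqrt 5) / 2 with hφ
  have hφ1 : 1 < φ := by rw [hφ]; linarith
  have h3 : φ ^ 3 = 2 + Real.sqrt 5 := phi_cube
  have h4 : (φ ^ 6 - 1) / φ ^ 3 = 4 := by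
    rw [show φ ^ 6 = (φ ^ 3) ^ 2 by ring, h3]
    rw [div_eq_iff (by nlinarith)]
    nlinarith
  have hkey := g_key φ hφ1
  rw [h4] at hkey
  have h6 : φ ^ 6 = (2 + Real.sqrt 5) ^ 2 := by
    rw [show φ ^ 6 = (φ ^ 3) ^ 2 by ring, h3]
  have hne : φ ^ 6 - 1 ≠ 0 := by
    have : (0:ℝ) < φ ^ 6 - 1 := by rw [h6]; nlinarith
    exact ne_of_gt this
  rw [hkey, div_eq_one_iff_eq hne]
  rw [hφ]
  linear_combination (-(Real.sqrt 5 ^ 4) / 64 + 5 * Real.sqrt 5 ^ 2 / 32 - 25 / 64) * hs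

/-- `g` is strictly decreasing on `(0, 4]`, is `> 1` on `(0, 4)`, and `g(4) = 1`. -/
theorem g_strictAntiOn_gt_one_and_g_four :
    StrictAntiOn g (Set.Ioc 0 4) ∧ (∀ m : ℝ, 0 < m → m < 4 → 1 < g m) ∧ g 4 = 1 := by
  have hs : Real.sqrt 5 ^ 2 = 5 := Real.sq_sqrt (by norm_num)
  have hs2 := sqrt5_gt_two
  set φ : ℝ := (1 + Real.sqrt 5) / 2 with hφ
  have hanti : StrictAntiOn g (Set.Ioc 0 4) := by
    intro a ha b hb hab
    obtain ⟨qa, hqa1, hqa3, hqam⟩ := q_exists a ha.1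
    obtain ⟨qb, hqb1, hqb3, hqbm⟩ := q_exists b (lt_trans ha.1 hab)
    have hqa0 : 0 < qa := lt_trans one_pos hqa1
    have hqb0 : 0 < qb := lt_trans one_pos hqb1
    -- qa < qb
    have hcab : (a + Real.sqrt (a ^ 2 + 4)) / 2 < (b + Real.sqrt (b ^ 2 + 4)) / 2 := by
      have : Real.sqrt (a ^ 2 + 4) < Real.sqrt (b ^ 2 + 4) := by
        apply Real.sqrt_lt_sqrt (by positivity)
        nlinarith [ha.1]
      linarith
    have hq3lt : qa ^ 3 < qb ^ 3 := by rw [hqa3, hqb3]; exact hcab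
    have hqab : qa < qb := by
      by_contra h
      push_neg at h
      have : qb ^ 3 ≤ qa ^ 3 := pow_le_pow_left₀ hqb0.le h 3
      linarith
    -- qb ≤ φ
    have hqbφ : qb ≤ φ := by
      have hcb : (b + Real.sqrt (b ^ 2 + 4)) / 2 ≤ 2 + Real.sqrt 5 := by
        have h20 : Real.sqrt (b ^ 2 + 4) ≤ Real.sqrt 20 := by
          apply Real.sqrt_le_sqrt
          nlinarith [hb.2, lt_trans ha.1 hab]
        have h20' : Real.sqrt 20 = 2 * Real.sqrt 5 := by
          rw [show (20:ℝ) = 2 ^ 2 * 5 by norm_num, Real.sqrt_mul (by positivity),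
            Real.sqrt_sq (by norm_num)]
        have := hb.2
        rw [h20'] at h20
        linarith
      have hq3 : qb ^ 3 ≤ φ ^ 3 := by rw [hqb3, phi_cube]; exact hcb
      by_contra h
      push_neg at h
      have : φ ^ 3 < qb ^ 3 := by
        exact pow_lt_pow_left₀ h (by positivity) (by norm_num)
      linarith
    have hqaφ : qa ≤ φ := le_of_lt (lt_of_lt_of_le hqab hqbφ)
    have hga : g a = (3 * qa ^ 5 - 5 * qa ^ 3 + 3 * qa) / (qa ^ 6 - 1) := by
      rw [hqam]; exact g_key qa hqa1
    have hgb : g b = (3 * qb ^ 5 - 5 * qb ^ 3 + 3 * qb) / (qb ^ 6 - 1) := by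
      rw [hqbm]; exact g_key qb hqb1
    rw [hga, hgb]
    exact G_anti ⟨hqa1, hqaφ⟩ ⟨hqb1, hqbφ⟩ hqab
  refine ⟨hanti, ?_, g_four⟩
  intro m hm0 hm4
  have := hanti ⟨hm0, hm4.le⟩ ⟨by norm_num, le_refl 4⟩ hm4
  rw [g_four] at this
  exact this
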